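/- Path composition of partial leaf functions is well-defined and associative: given signed sets X, Y, Z, W and partial leaf functions f : X → Y, g : Y → Z, h : Z → W (where a partial leaf function X → Y is a partial function from X⁺ + Y⁻ to X⁻ + Y⁺), the composite gf defined by (gf)(l) = l' iff there is a finite directed path from l to l' in the union of f and g is again a partial leaf function, and h(gf) = (hg)f. -/

import Mathlib

namespace SignedSets

/-- A signed set: a set together with a sign function (`true` = positive). -/
structure SignedSet where
  carrier : Type
  sign : carrier → Bool

/-- Admissibility for the domain side of a partial leaf function `X → Y`:
the element lies in `X⁺ + Y⁻`. -/
def domOK (X Y : SignedSet) : X.carrier ⊕ Y.carrier → Prop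
  | .inl x => X.sign x = true
  | .inr y => Y.sign y = false

/-- Admissibility for the codomain side of a partial leaf function `X → Y`:
the element lies in `X⁻ + Y⁺`. -/
def codOK (X Y : SignedSet) : X.carrier ⊕ Y.carrier → Prop
  | .inl x => X.sign x = false
  | .inr y => Y.sign y = true

/-- A partial leaf function `X → Y`, presented as a functional relation
from `X⁺ + Y⁻` to `X⁻ + Y⁺`. -/
structure PLF (X Y : SignedSet) where
  rel : X.carrier ⊕ Y.carrier → X.carrier ⊕ Y.carrier → Prop
  functional : ∀ ⦃a b c⦄, rel a b → rel a c → b = c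
  dom_ok : ∀ ⦃a b⦄, rel a b → domOK X Y a
  cod_ok : ∀ ⦃a b⦄, rel a b → codOK X Y b

variable {X Y Z : SignedSet}

/-- One directed edge of the union of `f : X → Y` and `g : Y → Z`, viewed as a
directed graph on `X + Y + Z`. -/
def step (f : PLF X Y) (g : PLF Y Z) :
    (X.carrier ⊕ Y.carrier ⊕ Z.carrier) → (X.carrier ⊕ Y.carrier ⊕ Z.carrier) → Prop :=
  fun a b =>
    (∃ a' b', f.rel a' b' ∧ a = Sum.map id Sum.inl a' ∧ b = Sum.map id Sum.inl b') ∨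
    (∃ a' b', g.rel a' b' ∧ a = Sum.inr a' ∧ b = Sum.inr b')

/-- Path composition: `(g f)(l) = l'` iff there is a finite directed path from `l` to
`l'` in the union of `f` and `g`. -/
def pcomp (f : PLF X Y) (g : PLF Y Z) :
    X.carrier ⊕ Z.carrier → X.carrier ⊕ Z.carrier → Prop :=
  fun a b => Relation.TransGen (step f g) (Sum.map id Sum.inr a) (Sum.map id Sum.inr b)

end SignedSets

namespace SignedSets

open Relation

variable {X Y Z : SignedSet}

/-! ### Generic helper lemmas -/

private lemma det_chain {V : Type} {R : V → V → Prop}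
    (det : ∀ ⦃a b c⦄, R a b → R a c → b = c) :
    ∀ {a b c : V}, ReflTransGen R a b → ReflTransGen R a c →
      ReflTransGen R b c ∨ ReflTransGen R c b := by
  intro a b c hab
  induction hab using ReflTransGen.head_induction_on with
  | refl => intro hac; exact Or.inl hac
  | head e rest ih =>
    intro hac
    rcases hac.cases_head with rfl | ⟨d, hd, hdc⟩
    · exact Or.inr (rest.head e)
    · exact ih (det e hd ▸ hdc)

private lemma step_det {f : PLF X Y} {g : PLF Y Z} :
    ∀ ⦃a b c⦄, step f g a b → step f g a c → b = c := by
  rintro a b c (⟨a1, b1, hf1, rfl, rfl⟩ | ⟨a1, b1, hg1, rfl, rfl⟩)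
      (⟨a2, b2, hf2, ha, rfl⟩ | ⟨a2, b2, hg2, ha, rfl⟩)
  · cases a1 <;> cases a2 <;> simp_all
    · exact congrArg _ (f.functional hf1 hf2)
    · exact congrArg _ (f.functional hf1 hf2)
  · -- f-edge and g-edge from the same source: impossible
    exfalso
    cases a1 <;> cases a2 <;> simp_all
    subst ha
    have h1 := f.dom_ok hf1
    have h2 := g.dom_ok hg2
    simp [domOK] at h1 h2
    simp [h1] at h2
  · exfalso
    cases a1 <;> cases a2 <;> simp_all
    subst ha
    have h1 := g.dom_ok hg1
    have h2 := f.dom_ok hf2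
    simp [domOK] at h1 h2
    simp [h1] at h2
  · cases a1 <;> cases a2 <;> simp_all
    · exact g.functional hg1 hg2
    · exact g.functional hg1 hg2

private lemma step_dom {f : PLF X Y} {g : PLF Y Z} {a : X.carrier ⊕ Z.carrier} {d} :
    step f g (Sum.map id Sum.inr a) d → domOK X Z a := by
  rintro (⟨a', b', hf, ha, rfl⟩ | ⟨a', b', hg, ha, rfl⟩)
  · cases a' <;> cases a <;> simp_all
    subst ha
    exact f.dom_ok hf
  · cases a' <;> cases a <;> simp_all
    subst ha
    exact g.dom_ok hg

private lemma step_cod {f : PLF X Y} {g : PLF Y Z} {b : X.carrier ⊕ Z.carrier} {p} :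
    step f g p (Sum.map id Sum.inr b) → codOK X Z b := by
  rintro (⟨a', b', hf, rfl, hb⟩ | ⟨a', b', hg, rfl, hb⟩)
  · cases b' <;> cases b <;> simp_all
    subst hb
    exact f.cod_ok hf
  · cases b' <;> cases b <;> simp_all
    subst hb
    exact g.cod_ok hg

private lemma no_through {f : PLF X Y} {g : PLF Y Z} {b : X.carrier ⊕ Z.carrier} {p d} :
    step f g p (Sum.map id Sum.inr b) → step f g (Sum.map id Sum.inr b) d → False := by
  intro h1 h2
  have hc := step_cod h1
  have hd := step_dom h2
  cases b <;> simp [domOK, codOK] at hc hd <;> simp [hc] at hd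

private lemma emb_inj : Function.Injective
    (Sum.map (@id X.carrier) (Sum.inr : Z.carrier → Y.carrier ⊕ Z.carrier)) := by
  intro a b h
  cases a <;> cases b <;> simp_all

/-- `pcomp f g` as a partial leaf function. -/
def pcompPLF (f : PLF X Y) (g : PLF Y Z) : PLF X Z where
  rel := pcomp f g
  functional := by
    intro a b c hab hac
    rcases det_chain step_det hab.to_reflTransGen hac.to_reflTransGen with h | h <;>
      rcases reflTransGen_iff_eq_or_transGen.mp h with he | ht
    · exact emb_inj he.symm
    · exfalso
      obtain ⟨p, _, hpb⟩ := TransGen.tail'_iff.mp hab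
      obtain ⟨d, hbd, _⟩ := TransGen.head'_iff.mp ht
      exact no_through hpb hbd
    · exact (emb_inj he.symm).symm
    · exfalso
      obtain ⟨p, _, hpc⟩ := TransGen.tail'_iff.mp hac
      obtain ⟨d, hcd, _⟩ := TransGen.head'_iff.mp ht
      exact no_through hpc hcd
  dom_ok := by
    intro a b hab
    obtain ⟨d, had, _⟩ := TransGen.head'_iff.mp hab
    exact step_dom had
  cod_ok := by
    intro a b hab
    obtain ⟨p, _, hpb⟩ := TransGen.tail'_iff.mp hab
    exact step_cod hpb


section Assoc

variable {X Y Z W : SignedSet}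

/-- A relation pushed forward along a map. -/
private def push {A V : Type} (κ : A → V) (S : A → A → Prop) : V → V → Prop :=
  fun v w => ∃ a b, S a b ∧ v = κ a ∧ w = κ b

private lemma tg_push {A V : Type} {κ : A → V} {S : A → A → Prop} {a b : A}
    (h : Relation.TransGen S a b) : Relation.TransGen (push κ S) (κ a) (κ b) :=
  Relation.TransGen.lift κ (fun a b hab => ⟨a, b, hab, rfl, rfl⟩) _ _ h

private lemma tg_pull {A V : Type} {κ : A → V} (hκ : Function.Injective κ)
    {S : A → A → Prop} :
    ∀ {v w}, Relation.TransGen (push κ S) v w →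
      ∀ {a b}, v = κ a → w = κ b → Relation.TransGen S a b := by
  intro v w hvw
  induction hvw with
  | single e =>
    rintro a b rfl rfl
    obtain ⟨a', b', hS, ha, hb⟩ := e
    cases hκ ha; cases hκ hb
    exact Relation.TransGen.single hS
  | tail _ e ih =>
    rintro a b rfl rfl
    obtain ⟨c, d, hS, hc, hd⟩ := e
    cases hκ hd
    exact (ih rfl hc).tail hS

private lemma tg_push_ends {A V : Type} {κ : A → V} {S : A → A → Prop} {v w : V}
    (h : Relation.TransGen (push κ S) v w) : (∃ a, v = κ a) ∧ (∃ b, w = κ b) := by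
  constructor
  · obtain ⟨d, ⟨a, b, _, ha, _⟩, _⟩ := Relation.TransGen.head'_iff.mp h; exact ⟨a, ha⟩
  · obtain ⟨p, _, ⟨a, b, _, _, hb⟩⟩ := Relation.TransGen.tail'_iff.mp h; exact ⟨b, hb⟩

/-- The chopping lemma: a path in a graph with edges `B ⊆ R ∪ S` between points of `D`
factors as a `T`-path, provided `S`-edges are `T`-edges between `D`-points and
nonempty `R`-paths between `D`-points are `T`-edges. -/
private lemma chop {V : Type} {B R S T : V → V → Prop} {D : V → Prop}
    (hB : ∀ ⦃x y⦄, B x y → R x y ∨ S x y)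
    (hS1 : ∀ ⦃x y⦄, S x y → D x) (hS2 : ∀ ⦃x y⦄, S x y → D y)
    (hT1 : ∀ ⦃x y⦄, S x y → T x y)
    (hT2 : ∀ ⦃x y⦄, D x → D y → Relation.TransGen R x y → T x y) :
    ∀ ⦃p q⦄, Relation.TransGen B p q → D q →
      ∀ ⦃v⦄, D v → Relation.ReflTransGen R v p → Relation.TransGen T v q := by
  intro p q hpq
  induction hpq using Relation.TransGen.head_induction_on with
  | single e =>
    intro hq v hv hvp
    rcases hB e with hR | hS
    · exact Relation.TransGen.single (hT2 hv hq (Relation.TransGen.tail' hvp hR))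
    · rcases Relation.reflTransGen_iff_eq_or_transGen.mp hvp with rfl | ht
      · exact Relation.TransGen.single (hT1 hS)
      · exact (Relation.TransGen.single (hT2 hv (hS1 hS) ht)).tail (hT1 hS)
  | head e rest IH =>
    intro hq v hv hvp
    rcases hB e with hR | hS
    · exact IH hq hv (hvp.tail hR)
    · rcases Relation.reflTransGen_iff_eq_or_transGen.mp hvp with rfl | ht
      · exact (Relation.TransGen.single (hT1 hS)).trans
          (IH hq (hS2 hS) Relation.ReflTransGen.refl)
      · exact (((Relation.TransGen.single (hT2 hv (hS1 hS) ht)).tail (hT1 hS))).trans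
          (IH hq (hS2 hS) Relation.ReflTransGen.refl)

/-! ### The big graph on `X + Y + Z + W` -/

/-- Vertices of the union graph of `f`, `g`, `h`. -/
@[reducible] private def BigV (X Y Z W : SignedSet) : Type :=
  X.carrier ⊕ (Y.carrier ⊕ (Z.carrier ⊕ W.carrier))

private def κf : X.carrier ⊕ Y.carrier → BigV X Y Z W := Sum.map id Sum.inl
private def κg : Y.carrier ⊕ Z.carrier → BigV X Y Z W :=
  fun s => Sum.inr (Sum.map id Sum.inl s)
private def κh : Z.carrier ⊕ W.carrier → BigV X Y Z W := fun s => Sum.inr (Sum.inr s)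
private def κ₁ : X.carrier ⊕ (Y.carrier ⊕ Z.carrier) → BigV X Y Z W :=
  Sum.map id (Sum.map id Sum.inl)
private def ι₁ : X.carrier ⊕ (Z.carrier ⊕ W.carrier) → BigV X Y Z W :=
  Sum.map id Sum.inr
private def κ₂ : Y.carrier ⊕ (Z.carrier ⊕ W.carrier) → BigV X Y Z W := Sum.inr
private def ι₂ : X.carrier ⊕ (Y.carrier ⊕ W.carrier) → BigV X Y Z W :=
  Sum.map id (Sum.map id Sum.inr)
private def eXW : X.carrier ⊕ W.carrier → BigV X Y Z W :=
  Sum.map id (fun w => Sum.inr (Sum.inr w))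

/-- All edges of the union graph of `f`, `g`, `h`. -/
private def bigB (f : PLF X Y) (g : PLF Y Z) (h : PLF Z W) :
    BigV X Y Z W → BigV X Y Z W → Prop :=
  fun v w => push κf f.rel v w ∨ push κg g.rel v w ∨ push κh h.rel v w

private lemma ι₁_inj : Function.Injective (ι₁ (X := X) (Y := Y) (Z := Z) (W := W)) := by
  rintro (x | s) (x' | s') h <;> simp [ι₁] at h <;> simp [h]

private lemma κ₁_inj : Function.Injective (κ₁ (X := X) (Y := Y) (Z := Z) (W := W)) := by
  rintro (x | (y | z)) (x' | (y' | z')) h <;> simp [κ₁] at h <;> simp [h]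

private lemma ι₂_inj : Function.Injective (ι₂ (X := X) (Y := Y) (Z := Z) (W := W)) := by
  rintro (x | (y | w)) (x' | (y' | w')) h <;> simp [ι₂] at h <;> simp [h]

private lemma κ₂_inj : Function.Injective (κ₂ (X := X) (Y := Y) (Z := Z) (W := W)) := by
  intro a b h; exact Sum.inr_injective h

private lemma coord1f (a : X.carrier ⊕ Y.carrier) :
    κ₁ (X := X) (Y := Y) (Z := Z) (W := W) (Sum.map id Sum.inl a) = κf a := by
  cases a <;> rfl

private lemma coord1g (a : Y.carrier ⊕ Z.carrier) :
    κ₁ (X := X) (Y := Y) (Z := Z) (W := W) (Sum.inr a) = κg a := by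
  cases a <;> rfl

private lemma coord2g (a : Y.carrier ⊕ Z.carrier) :
    κ₂ (X := X) (Y := Y) (Z := Z) (W := W) (Sum.map id Sum.inl a) = κg a := by
  cases a <;> rfl

private lemma coord2h (a : Z.carrier ⊕ W.carrier) :
    κ₂ (X := X) (Y := Y) (Z := Z) (W := W) (Sum.inr a) = κh a := rfl

private lemma coord1h (a : Z.carrier ⊕ W.carrier) :
    ι₁ (X := X) (Y := Y) (Z := Z) (W := W) (Sum.inr a) = κh a := rfl

private lemma coord2f (a : X.carrier ⊕ Y.carrier) :
    ι₂ (X := X) (Y := Y) (Z := Z) (W := W) (Sum.map id Sum.inl a) = κf a := by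
  cases a <;> rfl

private lemma coord1m (a : X.carrier ⊕ Z.carrier) :
    κ₁ (X := X) (Y := Y) (Z := Z) (W := W) (Sum.map id Sum.inr a)
      = ι₁ (Sum.map id Sum.inl a) := by
  cases a <;> rfl

private lemma coord2m (a : Y.carrier ⊕ W.carrier) :
    κ₂ (X := X) (Y := Y) (Z := Z) (W := W) (Sum.map id Sum.inr a) = ι₂ (Sum.inr a) := by
  cases a <;> rfl

private lemma coord1e (a : X.carrier ⊕ W.carrier) :
    eXW (X := X) (Y := Y) (Z := Z) (W := W) a = ι₁ (Sum.map id Sum.inr a) := by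
  cases a <;> rfl

private lemma coord2e (a : X.carrier ⊕ W.carrier) :
    eXW (X := X) (Y := Y) (Z := Z) (W := W) a = ι₂ (Sum.map id Sum.inr a) := by
  cases a <;> rfl

private lemma push_k1 {f : PLF X Y} {g : PLF Y Z} (v w : BigV X Y Z W) :
    push κ₁ (step f g) v w ↔ (push κf f.rel v w ∨ push κg g.rel v w) := by
  constructor
  · rintro ⟨a, b, (⟨a', b', hf, rfl, rfl⟩ | ⟨a', b', hg, rfl, rfl⟩), rfl, rfl⟩
    · exact Or.inl ⟨a', b', hf, (coord1f a'), (coord1f b')⟩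
    · exact Or.inr ⟨a', b', hg, (coord1g a'), (coord1g b')⟩
  · rintro (⟨a', b', hf, rfl, rfl⟩ | ⟨a', b', hg, rfl, rfl⟩)
    · exact ⟨_, _, Or.inl ⟨a', b', hf, rfl, rfl⟩, (coord1f a').symm, (coord1f b').symm⟩
    · exact ⟨_, _, Or.inr ⟨a', b', hg, rfl, rfl⟩, (coord1g a').symm, (coord1g b').symm⟩

private lemma push_k2 {g : PLF Y Z} {h : PLF Z W} (v w : BigV X Y Z W) :
    push κ₂ (step g h) v w ↔ (push κg g.rel v w ∨ push κh h.rel v w) := by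
  constructor
  · rintro ⟨a, b, (⟨a', b', hg, rfl, rfl⟩ | ⟨a', b', hh, rfl, rfl⟩), rfl, rfl⟩
    · exact Or.inl ⟨a', b', hg, (coord2g a'), (coord2g b')⟩
    · exact Or.inr ⟨a', b', hh, (coord2h a'), (coord2h b')⟩
  · rintro (⟨a', b', hg, rfl, rfl⟩ | ⟨a', b', hh, rfl, rfl⟩)
    · exact ⟨_, _, Or.inl ⟨a', b', hg, rfl, rfl⟩, (coord2g a').symm, (coord2g b').symm⟩
    · exact ⟨_, _, Or.inr ⟨a', b', hh, rfl, rfl⟩, (coord2h a').symm, (coord2h b').symm⟩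

private lemma match1 {a : X.carrier ⊕ (Y.carrier ⊕ Z.carrier)}
    {u : X.carrier ⊕ (Z.carrier ⊕ W.carrier)}
    (huv : κ₁ (X := X) (Y := Y) (Z := Z) (W := W) a = ι₁ u) :
    ∃ a₀ : X.carrier ⊕ Z.carrier,
      a = Sum.map id Sum.inr a₀ ∧ u = Sum.map id Sum.inl a₀ := by
  rcases a with x | (y | z) <;> rcases u with x' | (z' | w') <;>
    simp [κ₁, ι₁] at huv
  · subst huv; exact ⟨Sum.inl x, rfl, rfl⟩
  · subst huv; exact ⟨Sum.inr z, rfl, rfl⟩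

private lemma match2 {a : Y.carrier ⊕ (Z.carrier ⊕ W.carrier)}
    {u : X.carrier ⊕ (Y.carrier ⊕ W.carrier)}
    (huv : κ₂ (X := X) (Y := Y) (Z := Z) (W := W) a = ι₂ u) :
    ∃ a₀ : Y.carrier ⊕ W.carrier, a = Sum.map id Sum.inr a₀ ∧ u = Sum.inr a₀ := by
  rcases a with y | (z | w) <;> rcases u with x' | (y' | w') <;>
    simp [κ₂, ι₂] at huv
  · subst huv; exact ⟨Sum.inl y, rfl, rfl⟩
  · subst huv; exact ⟨Sum.inr w, rfl, rfl⟩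

end Assoc

section Assoc2

variable {X Y Z W : SignedSet} {f : PLF X Y} {g : PLF Y Z} {h : PLF Z W}

private lemma expand_left_one {u u' : X.carrier ⊕ (Z.carrier ⊕ W.carrier)}
    (e : step (pcompPLF f g) h u u') :
    Relation.TransGen (bigB f g h) (ι₁ u) (ι₁ u') := by
  rcases e with ⟨a₀, b₀, pc, rfl, rfl⟩ | ⟨a, b, hh, rfl, rfl⟩
  · have t : Relation.TransGen (push (κ₁ (X := X) (Y := Y) (Z := Z) (W := W)) (step f g))
        (κ₁ (Sum.map id Sum.inr a₀)) (κ₁ (Sum.map id Sum.inr b₀)) := tg_push pc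
    rw [coord1m, coord1m] at t
    exact Relation.TransGen.mono
      (fun x y hxy => ((push_k1 x y).mp hxy).elim Or.inl (fun hg' => Or.inr (Or.inl hg'))) _ _ t
  · exact Relation.TransGen.single
      (Or.inr (Or.inr ⟨a, b, hh, coord1h a, coord1h b⟩))

private lemma expand_left {u u' : X.carrier ⊕ (Z.carrier ⊕ W.carrier)}
    (t : Relation.TransGen (step (pcompPLF f g) h) u u') :
    Relation.TransGen (bigB f g h) (ι₁ u) (ι₁ u') := by
  induction t with
  | single e => exact expand_left_one e
  | tail _ e ih => exact ih.trans (expand_left_one e)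

private lemma expand_right_one {u u' : X.carrier ⊕ (Y.carrier ⊕ W.carrier)}
    (e : step f (pcompPLF g h) u u') :
    Relation.TransGen (bigB f g h) (ι₂ u) (ι₂ u') := by
  rcases e with ⟨a, b, hf, rfl, rfl⟩ | ⟨a₀, b₀, pc, rfl, rfl⟩
  · exact Relation.TransGen.single (Or.inl ⟨a, b, hf, coord2f a, coord2f b⟩)
  · have t : Relation.TransGen (push (κ₂ (X := X) (Y := Y) (Z := Z) (W := W)) (step g h))
        (κ₂ (Sum.map id Sum.inr a₀)) (κ₂ (Sum.map id Sum.inr b₀)) := tg_push pc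
    rw [coord2m, coord2m] at t
    exact Relation.TransGen.mono
      (fun x y hxy => ((push_k2 x y).mp hxy).elim (fun hg' => Or.inr (Or.inl hg'))
        (fun hh' => Or.inr (Or.inr hh'))) _ _ t

private lemma expand_right {u u' : X.carrier ⊕ (Y.carrier ⊕ W.carrier)}
    (t : Relation.TransGen (step f (pcompPLF g h)) u u') :
    Relation.TransGen (bigB f g h) (ι₂ u) (ι₂ u') := by
  induction t with
  | single e => exact expand_right_one e
  | tail _ e ih => exact ih.trans (expand_right_one e)

private lemma left_iff (a b : X.carrier ⊕ W.carrier) :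
    pcomp (pcompPLF f g) h a b ↔ Relation.TransGen (bigB f g h) (eXW a) (eXW b) := by
  constructor
  · intro hp
    have t := expand_left (u := Sum.map id Sum.inr a) (u' := Sum.map id Sum.inr b) hp
    rwa [← coord1e, ← coord1e] at t
  · intro hp
    have hch := chop (B := bigB f g h)
      (R := fun v w => push κf f.rel v w ∨ push κg g.rel v w)
      (S := push κh h.rel) (T := push ι₁ (step (pcompPLF f g) h))
      (D := fun v => ∃ u, v = ι₁ u)
      (fun x y hxy => by unfold bigB at hxy; tauto)
      (fun x y hxy => by
        obtain ⟨a', b', _, hv, _⟩ := hxy; exact ⟨Sum.inr a', hv.trans (coord1h a').symm⟩)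
      (fun x y hxy => by
        obtain ⟨a', b', _, _, hw⟩ := hxy; exact ⟨Sum.inr b', hw.trans (coord1h b').symm⟩)
      (fun x y hxy => by
        obtain ⟨a', b', hh', hv, hw⟩ := hxy
        exact ⟨Sum.inr a', Sum.inr b', Or.inr ⟨a', b', hh', rfl, rfl⟩,
          hv.trans (coord1h a').symm, hw.trans (coord1h b').symm⟩)
      (by
        intro x y hx hy ht
        obtain ⟨u, rfl⟩ := hx
        obtain ⟨u', rfl⟩ := hy
        have ht' : Relation.TransGen (push κ₁ (step f g)) (ι₁ u) (ι₁ u') :=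
          Relation.TransGen.mono (fun x y hxy => (push_k1 x y).mpr hxy) _ _ ht
        obtain ⟨⟨a1, ha1⟩, ⟨b1, hb1⟩⟩ := tg_push_ends ht'
        obtain ⟨a₀, rfl, rfl⟩ := match1 ha1.symm
        obtain ⟨b₀, rfl, rfl⟩ := match1 hb1.symm
        rw [← coord1m, ← coord1m] at ht'
        have pc : pcomp f g a₀ b₀ := tg_pull κ₁_inj ht' rfl rfl
        exact ⟨_, _, Or.inl ⟨a₀, b₀, pc, rfl, rfl⟩, rfl, rfl⟩)
    have t := hch hp ⟨_, coord1e b⟩ ⟨_, coord1e a⟩ Relation.ReflTransGen.refl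
    rw [coord1e a, coord1e b] at t
    exact tg_pull ι₁_inj t rfl rfl

private lemma right_iff (a b : X.carrier ⊕ W.carrier) :
    pcomp f (pcompPLF g h) a b ↔ Relation.TransGen (bigB f g h) (eXW a) (eXW b) := by
  constructor
  · intro hp
    have t := expand_right (u := Sum.map id Sum.inr a) (u' := Sum.map id Sum.inr b) hp
    rwa [← coord2e, ← coord2e] at t
  · intro hp
    have hch := chop (B := bigB f g h)
      (R := fun v w => push κg g.rel v w ∨ push κh h.rel v w)
      (S := push κf f.rel) (T := push ι₂ (step f (pcompPLF g h)))
      (D := fun v => ∃ u, v = ι₂ u)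
      (fun x y hxy => by unfold bigB at hxy; tauto)
      (fun x y hxy => by
        obtain ⟨a', b', _, hv, _⟩ := hxy
        exact ⟨Sum.map id Sum.inl a', hv.trans (coord2f a').symm⟩)
      (fun x y hxy => by
        obtain ⟨a', b', _, _, hw⟩ := hxy
        exact ⟨Sum.map id Sum.inl b', hw.trans (coord2f b').symm⟩)
      (fun x y hxy => by
        obtain ⟨a', b', hf', hv, hw⟩ := hxy
        exact ⟨Sum.map id Sum.inl a', Sum.map id Sum.inl b', Or.inl ⟨a', b', hf', rfl, rfl⟩,
          hv.trans (coord2f a').symm, hw.trans (coord2f b').symm⟩)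
      (by
        intro x y hx hy ht
        obtain ⟨u, rfl⟩ := hx
        obtain ⟨u', rfl⟩ := hy
        have ht' : Relation.TransGen (push κ₂ (step g h)) (ι₂ u) (ι₂ u') :=
          Relation.TransGen.mono (fun x y hxy => (push_k2 x y).mpr hxy) _ _ ht
        obtain ⟨⟨a1, ha1⟩, ⟨b1, hb1⟩⟩ := tg_push_ends ht'
        obtain ⟨a₀, rfl, rfl⟩ := match2 ha1.symm
        obtain ⟨b₀, rfl, rfl⟩ := match2 hb1.symm
        rw [← coord2m, ← coord2m] at ht'
        have pc : pcomp g h a₀ b₀ := tg_pull κ₂_inj ht' rfl rfl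
        exact ⟨_, _, Or.inr ⟨a₀, b₀, pc, rfl, rfl⟩, rfl, rfl⟩)
    have t := hch hp ⟨_, coord2e b⟩ ⟨_, coord2e a⟩ Relation.ReflTransGen.refl
    rw [coord2e a, coord2e b] at t
    exact tg_pull ι₂_inj t rfl rfl

end Assoc2


/-- Path composition of partial leaf functions is well-defined
(the path-composite relation is again a partial leaf function) and associative. -/
theorem statement0 :
    ∀ (X Y Z W : SignedSet) (f : PLF X Y) (g : PLF Y Z) (h : PLF Z W),
      ∃ (gf : PLF X Z) (hg : PLF Y W),
        gf.rel = pcomp f g ∧ hg.rel = pcomp g h ∧ pcomp gf h = pcomp f hg := by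
  intro X Y Z W f g h
  refine ⟨pcompPLF f g, pcompPLF g h, rfl, rfl, ?_⟩
  funext a b
  exact propext ((left_iff a b).trans (right_iff a b).symm)

end SignedSets
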